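/- arXiv:1911.00154 — 2 statements merged into one kernel-verified Lean document; each statement's English description precedes it below -/
import Mathlib

section
/- Let q be a prime power and let k, n ≥ 1. For all A, B ∈ F_q^{k×n}, the lifted subspaces U_A = rowspace(I_k | A) and U_B = rowspace(I_k | B) are k-dimensional subspaces of F_q^{k+n}; U_A = U_B if and only if A = B; and dim(U_A ∩ U_B) ≤ k − rank(A − B). Consequently the subspace distance satisfies d_S(U_A, U_B) ≥ 2·rank(A − B). -/
open Matrix

/-- The row space of a matrix: the span of its rows. -/
noncomputable def rowSpan {F : Type*} [Field F] {k c : ℕ} (M : Matrix (Fin k) (Fin c) F) :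
    Submodule F (Fin c → F) :=
  Submodule.span F (Set.range M)

/-- The subspace distance `d_S(U, W) = dim(U + W) - dim(U ∩ W)`. -/
noncomputable def sDist {F : Type*} [Field F] {N : ℕ} (U W : Submodule F (Fin N → F)) : ℕ :=
  Module.finrank F ↥(U ⊔ W) - Module.finrank F ↥(U ⊓ W)

/-- `rowspace (I_k | A)` as a subspace of `F^(k+n)`. -/
noncomputable def liftL {F : Type*} [Field F] {k n : ℕ} (A : Matrix (Fin k) (Fin n) F) :
    Submodule F (Fin (k + n) → F) :=
  rowSpan ((Matrix.fromCols (1 : Matrix (Fin k) (Fin k) F) A).submatrix id finSumFinEquiv.symm)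

section Aux

variable {F : Type*} [Field F] {k n : ℕ}

/-- The lifted matrix `(I | A)` reindexed to `Fin (k+n)` columns. -/
noncomputable def liftMat (A : Matrix (Fin k) (Fin n) F) : Matrix (Fin k) (Fin (k + n)) F :=
  (Matrix.fromCols (1 : Matrix (Fin k) (Fin k) F) A).submatrix id finSumFinEquiv.symm

lemma liftL_eq_range (A : Matrix (Fin k) (Fin n) F) :
    liftL A = LinearMap.range (liftMat A).vecMulLinear := by
  rw [liftL, rowSpan, range_vecMulLinear]; rfl

lemma vecMul_liftMat (A : Matrix (Fin k) (Fin n) F) (x : Fin k → F) (j : Fin (k + n)) :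
    (x ᵥ* liftMat A) j = Sum.elim x (x ᵥ* A) (finSumFinEquiv.symm j) := by
  have h : (x ᵥ* liftMat A) j
      = (x ᵥ* Matrix.fromCols (1 : Matrix (Fin k) (Fin k) F) A) (finSumFinEquiv.symm j) := by
    simp [liftMat, Matrix.vecMul, dotProduct]
  rw [h, Matrix.vecMul_fromCols, Matrix.vecMul_one]

lemma vecMul_liftMat_inl (A : Matrix (Fin k) (Fin n) F) (x : Fin k → F) (a : Fin k) :
    (x ᵥ* liftMat A) (finSumFinEquiv (Sum.inl a)) = x a := by
  simp [vecMul_liftMat]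

lemma vecMul_liftMat_inr (A : Matrix (Fin k) (Fin n) F) (x : Fin k → F) (b : Fin n) :
    (x ᵥ* liftMat A) (finSumFinEquiv (Sum.inr b)) = (x ᵥ* A) b := by
  simp [vecMul_liftMat]

lemma liftMat_injective (A : Matrix (Fin k) (Fin n) F) :
    Function.Injective (liftMat A).vecMulLinear := by
  rw [← LinearMap.ker_eq_bot, eq_bot_iff]
  intro x hx
  simp only [LinearMap.mem_ker, Matrix.vecMulLinear_apply] at hx
  have : x = 0 := by
    funext a
    have := congrFun hx (finSumFinEquiv (Sum.inl a))
    rwa [vecMul_liftMat_inl] at this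
  simp [this]

lemma finrank_liftL (A : Matrix (Fin k) (Fin n) F) :
    Module.finrank F ↥(liftL A) = k := by
  rw [liftL_eq_range]
  rw [LinearMap.finrank_range_of_inj (liftMat_injective A)]
  simp

/-- The restriction map recovering the first `k` coordinates. -/
noncomputable def resk : (Fin (k + n) → F) →ₗ[F] (Fin k → F) :=
  LinearMap.funLeft F F (fun a => finSumFinEquiv (Sum.inl a))

lemma resk_vecMul (A : Matrix (Fin k) (Fin n) F) (x : Fin k → F) :
    resk (x ᵥ* liftMat A) = x := by
  funext a
  exact vecMul_liftMat_inl A x a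

lemma mem_liftL_iff (A : Matrix (Fin k) (Fin n) F) (v : Fin (k + n) → F) :
    v ∈ liftL A ↔ v = resk v ᵥ* liftMat A := by
  rw [liftL_eq_range]
  constructor
  · rintro ⟨x, rfl⟩
    simp only [Matrix.vecMulLinear_apply]
    rw [resk_vecMul]
  · intro h
    exact ⟨resk v, h.symm⟩

lemma rank_eq_finrank_range_vecMulLinear (M : Matrix (Fin k) (Fin n) F) :
    M.rank = Module.finrank F ↥(LinearMap.range M.vecMulLinear) := by
  have h : M.vecMulLinear = Mᵀ.mulVecLin := by
    rw [← Matrix.vecMulLinear_transpose, Matrix.transpose_transpose]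
  rw [h, ← Matrix.rank, Matrix.rank_transpose]

lemma finrank_inf_le (A B : Matrix (Fin k) (Fin n) F) :
    Module.finrank F ↥(liftL A ⊓ liftL B) ≤ k - (A - B).rank := by
  set K := LinearMap.ker (A - B).vecMulLinear with hK
  -- map the intersection into the kernel of (A-B).vecMulLinear
  have hmap : ∀ v ∈ liftL A ⊓ liftL B, resk v ∈ K := by
    rintro v ⟨hvA, hvB⟩
    rw [SetLike.mem_coe, mem_liftL_iff] at hvA hvB
    simp only [hK, LinearMap.mem_ker, Matrix.vecMulLinear_apply, Matrix.sub_vecMul]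
    funext b
    have h1 : (resk v ᵥ* A) b = v (finSumFinEquiv (Sum.inr b)) := by
      conv_rhs => rw [hvA]
      rw [vecMul_liftMat_inr]
    have h2 : (resk v ᵥ* B) b = v (finSumFinEquiv (Sum.inr b)) := by
      conv_rhs => rw [hvB]
      rw [vecMul_liftMat_inr]
    simp [Matrix.vecMul_sub, h1, h2]
  let φ : ↥(liftL A ⊓ liftL B) →ₗ[F] ↥K :=
    LinearMap.codRestrict K ((resk).comp (liftL A ⊓ liftL B).subtype)
      (fun v => hmap v v.2)
  have hφinj : Function.Injective φ := by
    intro v w h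
    have h' : resk (v : Fin (k + n) → F) = resk (w : Fin (k + n) → F) :=
      congrArg Subtype.val h
    have hv : (v : Fin (k + n) → F) = resk (v : Fin (k + n) → F) ᵥ* liftMat A :=
      (mem_liftL_iff A _).mp v.2.1
    have hw : (w : Fin (k + n) → F) = resk (w : Fin (k + n) → F) ᵥ* liftMat A :=
      (mem_liftL_iff A _).mp w.2.1
    ext1
    rw [hv, hw, h']
  have hle : Module.finrank F ↥(liftL A ⊓ liftL B) ≤ Module.finrank F ↥K :=
    LinearMap.finrank_le_finrank_of_injective hφinj
  have hrn : Module.finrank F ↥(LinearMap.range (A - B).vecMulLinear)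
      + Module.finrank F ↥K = k := by
    have := LinearMap.finrank_range_add_finrank_ker (A - B).vecMulLinear
    simpa using this
  have hrank := rank_eq_finrank_range_vecMulLinear (A - B)
  omega

end Aux

theorem stmt0 (q k n : ℕ) (hq : IsPrimePow q) (hk : 1 ≤ k) (hn : 1 ≤ n)
    (F : Type*) [Field F] [Fintype F] (hF : Fintype.card F = q)
    (A B : Matrix (Fin k) (Fin n) F) :
    Module.finrank F ↥(liftL A) = k ∧
    Module.finrank F ↥(liftL B) = k ∧
    (liftL A = liftL B ↔ A = B) ∧
    Module.finrank F ↥(liftL A ⊓ liftL B) ≤ k - (A - B).rank ∧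
    2 * (A - B).rank ≤ sDist (liftL A) (liftL B) := by
  refine ⟨finrank_liftL A, finrank_liftL B, ?_, finrank_inf_le A B, ?_⟩
  · constructor
    · intro h
      ext i b
      have hmem : (Pi.single i 1 : Fin k → F) ᵥ* liftMat A ∈ liftL B := by
        rw [← h, liftL_eq_range]
        exact ⟨Pi.single i 1, rfl⟩
      rw [mem_liftL_iff, resk_vecMul] at hmem
      have := congrFun hmem (finSumFinEquiv (Sum.inr b))
      rw [vecMul_liftMat_inr, vecMul_liftMat_inr] at this
      simpa using this
    · rintro rfl; rfl
  · -- subspace distance bound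
    have hsum := Submodule.finrank_sup_add_finrank_inf_eq (liftL A) (liftL B)
    have hA := finrank_liftL A
    have hB := finrank_liftL B
    have hinf := finrank_inf_le A B
    have hrk : (A - B).rank ≤ k := by
      have := Matrix.rank_le_card_height (A - B)
      simpa using this
    rw [sDist]
    omega
end

section
/- Let q be a prime power, n ≥ k ≥ e ≥ 1. Let Q_1 ⊆ F_q^{k×n} be a code with minimum rank distance e, and let Q_2 ⊆ F_q^{k×n} be a code with minimum rank distance e such that every element of Q_2 has rank at most k − e. Then the family C = {rowspace(I_k | A) : A ∈ Q_1} ∪ {rowspace(B | I_k) : B ∈ Q_2} consists of exactly |Q_1| + |Q_2| distinct k-dimensional subspaces of F_q^{n+k} with pairwise subspace distances at least 2e. In particular, A_q(n+k, 2e, k) ≥ |Q_1| + |Q_2|. -/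
open Matrix

/-- `rowspace (I_k | A)` as a subspace of `F^(n+k)`, with `I_k` in the first `k` coordinates. -/
noncomputable def liftId {F : Type*} [Field F] {k n : ℕ} (A : Matrix (Fin k) (Fin n) F) :
    Submodule F (Fin (n + k) → F) :=
  rowSpan ((Matrix.fromCols (1 : Matrix (Fin k) (Fin k) F) A).submatrix id
    ((finSumFinEquiv.trans (finCongr (Nat.add_comm k n))).symm))

/-- `rowspace (B | I_k)` as a subspace of `F^(n+k)`, with `I_k` in the last `k` coordinates. -/
noncomputable def liftIdR {F : Type*} [Field F] {k n : ℕ} (B : Matrix (Fin k) (Fin n) F) :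
    Submodule F (Fin (n + k) → F) :=
  rowSpan ((Matrix.fromCols B (1 : Matrix (Fin k) (Fin k) F)).submatrix id finSumFinEquiv.symm)

/-- `A_q(N, d, k)`: the maximum size of a constant dimension code of `k`-dimensional
subspaces of `F^N` with pairwise subspace distances at least `d`. -/
noncomputable def Aq (F : Type*) [Field F] (N d k : ℕ) : ℕ :=
  sSup {M : ℕ | ∃ C : Set (Submodule F (Fin N → F)), C.Finite ∧ C.ncard = M ∧
    (∀ U ∈ C, Module.finrank F ↥U = k) ∧
    (∀ U ∈ C, ∀ W ∈ C, U ≠ W → d ≤ sDist U W)}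

section Aux
variable {F : Type*} [Field F] {k n : ℕ}

private noncomputable def M1 (A : Matrix (Fin k) (Fin n) F) : Matrix (Fin k) (Fin (n + k)) F :=
  (Matrix.fromCols (1 : Matrix (Fin k) (Fin k) F) A).submatrix id
    ((finSumFinEquiv.trans (finCongr (Nat.add_comm k n))).symm)

private noncomputable def M2 (B : Matrix (Fin k) (Fin n) F) : Matrix (Fin k) (Fin (n + k)) F :=
  (Matrix.fromCols B (1 : Matrix (Fin k) (Fin k) F)).submatrix id finSumFinEquiv.symm

lemma liftId_eq (A : Matrix (Fin k) (Fin n) F) :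
    liftId A = LinearMap.range (M1 A).vecMulLinear := by
  rw [range_vecMulLinear]; rfl

lemma liftIdR_eq (B : Matrix (Fin k) (Fin n) F) :
    liftIdR B = LinearMap.range (M2 B).vecMulLinear := by
  rw [range_vecMulLinear]; rfl

private def posL (n k : ℕ) (i : Fin k) : Fin (n + k) := ⟨i, by omega⟩
private def posA (n k : ℕ) (j : Fin n) : Fin (n + k) := ⟨k + j, by omega⟩
private def posR (n k : ℕ) (i : Fin k) : Fin (n + k) := ⟨n + i, by omega⟩
private def posB (n k : ℕ) (j : Fin n) : Fin (n + k) := ⟨j, by omega⟩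

lemma s1L (i : Fin k) :
    (finSumFinEquiv.trans (finCongr (Nat.add_comm k n))).symm (posL n k i) = Sum.inl i := by
  rw [Equiv.symm_apply_eq]; apply Fin.ext; simp [posL]

lemma s1A (j : Fin n) :
    (finSumFinEquiv.trans (finCongr (Nat.add_comm k n))).symm (posA n k j) = Sum.inr j := by
  rw [Equiv.symm_apply_eq]; apply Fin.ext; simp [posA]; omega

lemma s2R (i : Fin k) : finSumFinEquiv.symm (posR n k i) = Sum.inr i := by
  rw [Equiv.symm_apply_eq]; apply Fin.ext; simp [posR]

lemma s2B (j : Fin n) : finSumFinEquiv.symm (posB n k j) = Sum.inl j := by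
  rw [Equiv.symm_apply_eq]; apply Fin.ext; simp [posB]

lemma M1_apply (A : Matrix (Fin k) (Fin n) F) (y : Fin k → F) :
    (M1 A).vecMulLinear y = fun j => Sum.elim y (y ᵥ* A)
      ((finSumFinEquiv.trans (finCongr (Nat.add_comm k n))).symm j) := by
  funext j
  have h : ((M1 A).vecMulLinear y) j = (y ᵥ* Matrix.fromCols 1 A)
      ((finSumFinEquiv.trans (finCongr (Nat.add_comm k n))).symm j) := by
    simp [M1, Matrix.vecMul, dotProduct]
  rw [h, Matrix.vecMul_fromCols, Matrix.vecMul_one]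

lemma M2_apply (B : Matrix (Fin k) (Fin n) F) (x : Fin k → F) :
    (M2 B).vecMulLinear x = fun j => Sum.elim (x ᵥ* B) x (finSumFinEquiv.symm j) := by
  funext j
  have h : ((M2 B).vecMulLinear x) j = (x ᵥ* Matrix.fromCols B 1)
      (finSumFinEquiv.symm j) := by
    simp [M2, Matrix.vecMul, dotProduct]
  rw [h, Matrix.vecMul_fromCols, Matrix.vecMul_one]

lemma eval1L (A : Matrix (Fin k) (Fin n) F) (y : Fin k → F) (i : Fin k) :
    (M1 A).vecMulLinear y (posL n k i) = y i := by rw [M1_apply]; simp only [s1L, Sum.elim_inl]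

lemma eval1A (A : Matrix (Fin k) (Fin n) F) (y : Fin k → F) (j : Fin n) :
    (M1 A).vecMulLinear y (posA n k j) = (y ᵥ* A) j := by rw [M1_apply]; simp only [s1A, Sum.elim_inr]

lemma eval2R (B : Matrix (Fin k) (Fin n) F) (x : Fin k → F) (i : Fin k) :
    (M2 B).vecMulLinear x (posR n k i) = x i := by rw [M2_apply]; simp only [s2R, Sum.elim_inr]

lemma eval2B (B : Matrix (Fin k) (Fin n) F) (x : Fin k → F) (j : Fin n) :
    (M2 B).vecMulLinear x (posB n k j) = (x ᵥ* B) j := by rw [M2_apply]; simp only [s2B, Sum.elim_inl]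

end Aux
noncomputable def pi1 {F : Type*} [Field F] {k n : ℕ} : (Fin (n + k) → F) →ₗ[F] (Fin k → F) :=
  LinearMap.funLeft F F (posL n k)

noncomputable def pi2 {F : Type*} [Field F] {k n : ℕ} : (Fin (n + k) → F) →ₗ[F] (Fin k → F) :=
  LinearMap.funLeft F F (posR n k)

section Aux2
variable {F : Type*} [Field F] {k n : ℕ}

lemma pi1_apply (v : Fin (n + k) → F) (i : Fin k) : pi1 v i = v (posL n k i) := rfl
lemma pi2_apply (v : Fin (n + k) → F) (i : Fin k) : pi2 v i = v (posR n k i) := rfl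

lemma proj1 (A : Matrix (Fin k) (Fin n) F) (y : Fin k → F) :
    pi1 ((M1 A).vecMulLinear y) = y := funext fun i => eval1L A y i

lemma proj2 (B : Matrix (Fin k) (Fin n) F) (x : Fin k → F) :
    pi2 ((M2 B).vecMulLinear x) = x := funext fun i => eval2R B x i

lemma liftId_repr {A : Matrix (Fin k) (Fin n) F} {v : Fin (n + k) → F} (hv : v ∈ liftId A) :
    v = (M1 A).vecMulLinear (pi1 v) := by
  rw [liftId_eq] at hv; obtain ⟨y, hy⟩ := hv; rw [← hy, proj1]

lemma liftIdR_repr {B : Matrix (Fin k) (Fin n) F} {v : Fin (n + k) → F} (hv : v ∈ liftIdR B) :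
    v = (M2 B).vecMulLinear (pi2 v) := by
  rw [liftIdR_eq] at hv; obtain ⟨x, hx⟩ := hv; rw [← hx, proj2]

lemma M1_inj (A : Matrix (Fin k) (Fin n) F) : Function.Injective (M1 A).vecMulLinear := by
  intro a b hab
  have h := congrArg pi1 hab
  rwa [proj1, proj1] at h

lemma M2_inj (B : Matrix (Fin k) (Fin n) F) : Function.Injective (M2 B).vecMulLinear := by
  intro a b hab
  have h := congrArg pi2 hab
  rwa [proj2, proj2] at h

lemma finrank_liftId (A : Matrix (Fin k) (Fin n) F) :
    Module.finrank F ↥(liftId A) = k := by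
  rw [liftId_eq, LinearMap.finrank_range_of_inj (M1_inj A), Module.finrank_fin_fun]

lemma finrank_liftIdR (B : Matrix (Fin k) (Fin n) F) :
    Module.finrank F ↥(liftIdR B) = k := by
  rw [liftIdR_eq, LinearMap.finrank_range_of_inj (M2_inj B), Module.finrank_fin_fun]

lemma finrank_le_of_proj {N m : ℕ} (U : Submodule F (Fin N → F))
    (π : (Fin N → F) →ₗ[F] (Fin m → F)) (S : Submodule F (Fin m → F))
    (hinj : ∀ v ∈ U, π v = 0 → v = 0) (himg : ∀ v ∈ U, π v ∈ S) :
    Module.finrank F ↥U ≤ Module.finrank F ↥S := by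
  let g : ↥U →ₗ[F] ↥S := (π.domRestrict U).codRestrict S (fun v => himg v v.2)
  have hg : Function.Injective g := by
    intro a b hab
    have h1 : π a.1 = π b.1 := congrArg Subtype.val hab
    have h2 : π (a.1 - b.1) = 0 := by rw [map_sub, h1, sub_self]
    have h3 : a.1 - b.1 = 0 := hinj _ (U.sub_mem a.2 b.2) h2
    exact Subtype.ext (sub_eq_zero.mp h3)
  exact LinearMap.finrank_le_finrank_of_injective hg

end Aux2
section Aux3
variable {F : Type*} [Field F] {k n e : ℕ}

lemma finrank_range_vecMulLinear (M : Matrix (Fin k) (Fin n) F) :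
    Module.finrank F ↥(LinearMap.range M.vecMulLinear) = M.rank := by
  rw [range_vecMulLinear, Matrix.rank_eq_finrank_span_row]

lemma finrank_ker_vecMulLinear (M : Matrix (Fin k) (Fin n) F) :
    Module.finrank F ↥(LinearMap.ker M.vecMulLinear) = k - M.rank := by
  have h := LinearMap.finrank_range_add_finrank_ker M.vecMulLinear
  rw [Module.finrank_fin_fun, finrank_range_vecMulLinear] at h
  omega

lemma inf_bound_11 (A A' : Matrix (Fin k) (Fin n) F) (hr : e ≤ (A - A').rank) :
    Module.finrank F ↥(liftId A ⊓ liftId A') ≤ k - e := by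
  have h1 : Module.finrank F ↥(liftId A ⊓ liftId A') ≤
      Module.finrank F ↥(LinearMap.ker (A - A').vecMulLinear) := by
    apply finrank_le_of_proj
    · intro v hv hv0
      rw [liftId_repr hv.1, hv0, map_zero]
    · intro v hv
      rw [LinearMap.mem_ker]
      funext j
      have hA := congrFun (liftId_repr hv.1) (posA n k j)
      have hA' := congrFun (liftId_repr hv.2) (posA n k j)
      rw [eval1A] at hA hA'
      have hpi : pi1 v = pi1 v := rfl
      have h2 : (pi1 v ᵥ* A) j = (pi1 v ᵥ* A') j := by rw [← hA, ← hA']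
      simp only [Matrix.vecMulLinear_apply, Matrix.vecMul_sub, Pi.sub_apply, Pi.zero_apply]
      rw [h2, sub_self]
  rw [finrank_ker_vecMulLinear] at h1
  omega

lemma inf_bound_22 (B B' : Matrix (Fin k) (Fin n) F) (hr : e ≤ (B - B').rank) :
    Module.finrank F ↥(liftIdR B ⊓ liftIdR B') ≤ k - e := by
  have h1 : Module.finrank F ↥(liftIdR B ⊓ liftIdR B') ≤
      Module.finrank F ↥(LinearMap.ker (B - B').vecMulLinear) := by
    apply finrank_le_of_proj
    · intro v hv hv0
      rw [liftIdR_repr hv.1, hv0, map_zero]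
    · intro v hv
      rw [LinearMap.mem_ker]
      funext j
      have hB := congrFun (liftIdR_repr hv.1) (posB n k j)
      have hB' := congrFun (liftIdR_repr hv.2) (posB n k j)
      rw [eval2B] at hB hB'
      have h2 : (pi2 v ᵥ* B) j = (pi2 v ᵥ* B') j := by rw [← hB, ← hB']
      simp only [Matrix.vecMulLinear_apply, Matrix.vecMul_sub, Pi.sub_apply, Pi.zero_apply]
      rw [h2, sub_self]
  rw [finrank_ker_vecMulLinear] at h1
  omega

lemma inf_bound_12 (hkn : k ≤ n) (A B : Matrix (Fin k) (Fin n) F) (hr : B.rank ≤ k - e) :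
    Module.finrank F ↥(liftId A ⊓ liftIdR B) ≤ k - e := by
  have key : ∀ i : Fin k, posL n k i = posB n k (Fin.castLE hkn i) := by
    intro i; apply Fin.ext; simp [posL, posB]
  have h1 : Module.finrank F ↥(liftId A ⊓ liftIdR B) ≤
      Module.finrank F ↥(Submodule.map (LinearMap.funLeft F F (Fin.castLE hkn))
        (LinearMap.range B.vecMulLinear)) := by
    apply finrank_le_of_proj
    · intro v hv hv0
      rw [liftId_repr hv.1, hv0, map_zero]
    · intro v hv
      refine Submodule.mem_map.mpr ⟨B.vecMulLinear (pi2 v), LinearMap.mem_range_self _ _, ?_⟩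
      funext i
      have hB := congrFun (liftIdR_repr hv.2) (posB n k (Fin.castLE hkn i))
      rw [eval2B] at hB
      rw [LinearMap.funLeft_apply, pi1_apply, key i, hB]
      rfl
  refine h1.trans (le_trans (Submodule.finrank_map_le _ _) ?_)
  rw [finrank_range_vecMulLinear]
  exact hr

end Aux3
section Aux4
variable {F : Type*} [Field F] {k n e : ℕ}

lemma liftId_inj : Function.Injective (liftId : Matrix (Fin k) (Fin n) F → _) := by
  intro A A' h
  ext i j
  classical
  have hm : (M1 A).vecMulLinear (Pi.single i 1) ∈ liftId A' := by
    rw [← h, liftId_eq]; exact ⟨_, rfl⟩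
  have hrepr := liftId_repr hm
  rw [proj1] at hrepr
  have h2 := congrFun hrepr (posA n k j)
  rw [eval1A, eval1A] at h2
  simpa [Matrix.single_one_vecMul] using h2

lemma liftIdR_inj : Function.Injective (liftIdR : Matrix (Fin k) (Fin n) F → _) := by
  intro B B' h
  ext i j
  classical
  have hm : (M2 B).vecMulLinear (Pi.single i 1) ∈ liftIdR B' := by
    rw [← h, liftIdR_eq]; exact ⟨_, rfl⟩
  have hrepr := liftIdR_repr hm
  rw [proj2] at hrepr
  have h2 := congrFun hrepr (posB n k j)
  rw [eval2B, eval2B] at h2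
  simpa [Matrix.single_one_vecMul] using h2

lemma liftId_ne_liftIdR (hkn : k ≤ n) (he : 1 ≤ e) (hek : e ≤ k)
    (A B : Matrix (Fin k) (Fin n) F) (hr : B.rank ≤ k - e) : liftId A ≠ liftIdR B := by
  intro h
  have h1 := inf_bound_12 (e := e) hkn A B hr
  rw [h, inf_idem, finrank_liftIdR] at h1
  omega

lemma sDist_bound {N : ℕ} {U W : Submodule F (Fin N → F)} (hek : e ≤ k)
    (hU : Module.finrank F ↥U = k) (hW : Module.finrank F ↥W = k)
    (hinf : Module.finrank F ↥(U ⊓ W) ≤ k - e) : 2 * e ≤ sDist U W := by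
  have h := Submodule.finrank_sup_add_finrank_inf_eq U W
  rw [hU, hW] at h
  unfold sDist
  omega

end Aux4

theorem stmt4 (q k n e : ℕ) (hq : IsPrimePow q) (he : 1 ≤ e) (hek : e ≤ k) (hkn : k ≤ n)
    (F : Type*) [Field F] [Fintype F] (hF : Fintype.card F = q)
    (Q₁ Q₂ : Finset (Matrix (Fin k) (Fin n) F))
    (hQ₁ : ∀ A ∈ Q₁, ∀ B ∈ Q₁, A ≠ B → e ≤ (A - B).rank)
    (hQ₂ : ∀ A ∈ Q₂, ∀ B ∈ Q₂, A ≠ B → e ≤ (A - B).rank)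
    (hQ₂r : ∀ B ∈ Q₂, B.rank ≤ k - e) :
    Set.ncard ((fun A : Matrix (Fin k) (Fin n) F => liftId A) '' ↑Q₁
        ∪ (fun B : Matrix (Fin k) (Fin n) F => liftIdR B) '' ↑Q₂) = Q₁.card + Q₂.card ∧
    (∀ U ∈ (fun A : Matrix (Fin k) (Fin n) F => liftId A) '' ↑Q₁
        ∪ (fun B : Matrix (Fin k) (Fin n) F => liftIdR B) '' ↑Q₂,
      Module.finrank F ↥U = k) ∧
    (∀ U ∈ (fun A : Matrix (Fin k) (Fin n) F => liftId A) '' ↑Q₁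
        ∪ (fun B : Matrix (Fin k) (Fin n) F => liftIdR B) '' ↑Q₂,
      ∀ W ∈ (fun A : Matrix (Fin k) (Fin n) F => liftId A) '' ↑Q₁
        ∪ (fun B : Matrix (Fin k) (Fin n) F => liftIdR B) '' ↑Q₂,
      U ≠ W → 2 * e ≤ sDist U W) ∧
    Q₁.card + Q₂.card ≤ Aq F (n + k) (2 * e) k := by
  classical
  set S₁ := (fun A : Matrix (Fin k) (Fin n) F => liftId A) '' ↑Q₁ with hS₁
  set S₂ := (fun B : Matrix (Fin k) (Fin n) F => liftIdR B) '' ↑Q₂ with hS₂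
  have hdisj : Disjoint S₁ S₂ := by
    rw [Set.disjoint_left]
    rintro U ⟨A, hA, rfl⟩ ⟨B, hB, hBe⟩
    exact liftId_ne_liftIdR hkn he hek A B (hQ₂r B hB) hBe.symm
  have hfin1 : S₁.Finite := Q₁.finite_toSet.image _
  have hfin2 : S₂.Finite := Q₂.finite_toSet.image _
  have hcard : (S₁ ∪ S₂).ncard = Q₁.card + Q₂.card := by
    rw [Set.ncard_union_eq hdisj hfin1 hfin2, hS₁, hS₂,
      Set.ncard_image_of_injOn (liftId_inj.injOn),
      Set.ncard_image_of_injOn (liftIdR_inj.injOn),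
      Set.ncard_coe_finset, Set.ncard_coe_finset]
  have hdim : ∀ U ∈ S₁ ∪ S₂, Module.finrank F ↥U = k := by
    rintro U (⟨A, hA, rfl⟩ | ⟨B, hB, rfl⟩)
    · exact finrank_liftId A
    · exact finrank_liftIdR B
  have hdist : ∀ U ∈ S₁ ∪ S₂, ∀ W ∈ S₁ ∪ S₂, U ≠ W → 2 * e ≤ sDist U W := by
    rintro U (⟨A, hA, rfl⟩ | ⟨B, hB, rfl⟩) W (⟨A', hA', rfl⟩ | ⟨B', hB', rfl⟩) hUW
    · exact sDist_bound hek (finrank_liftId A) (finrank_liftId A')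
        (inf_bound_11 A A' (hQ₁ A hA A' hA' (fun hc => hUW (by rw [hc]))))
    · exact sDist_bound hek (finrank_liftId A) (finrank_liftIdR B')
        (inf_bound_12 hkn A B' (hQ₂r B' hB'))
    · refine sDist_bound hek (finrank_liftIdR B) (finrank_liftId A') ?_
      rw [inf_comm]
      exact inf_bound_12 hkn A' B (hQ₂r B hB)
    · exact sDist_bound hek (finrank_liftIdR B) (finrank_liftIdR B')
        (inf_bound_22 B B' (hQ₂ B hB B' hB' (fun hc => hUW (by rw [hc]))))
  refine ⟨hcard, hdim, hdist, ?_⟩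
  have hmem : Q₁.card + Q₂.card ∈ {M : ℕ |
      ∃ C : Set (Submodule F (Fin (n + k) → F)), C.Finite ∧ C.ncard = M ∧
        (∀ U ∈ C, Module.finrank F ↥U = k) ∧
        (∀ U ∈ C, ∀ W ∈ C, U ≠ W → 2 * e ≤ sDist U W)} :=
    ⟨S₁ ∪ S₂, hfin1.union hfin2, hcard, hdim, hdist⟩
  haveI hfinty : Finite (Submodule F (Fin (n + k) → F)) :=
    Finite.of_injective (fun s : Submodule F (Fin (n + k) → F) => (s : Set (Fin (n + k) → F)))
      SetLike.coe_injective
  have hbdd : BddAbove {M : ℕ |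
      ∃ C : Set (Submodule F (Fin (n + k) → F)), C.Finite ∧ C.ncard = M ∧
        (∀ U ∈ C, Module.finrank F ↥U = k) ∧
        (∀ U ∈ C, ∀ W ∈ C, U ≠ W → 2 * e ≤ sDist U W)} := by
    refine ⟨Nat.card (Submodule F (Fin (n + k) → F)), ?_⟩
    rintro M ⟨C, hCfin, rfl, -, -⟩
    calc C.ncard ≤ (Set.univ : Set (Submodule F (Fin (n + k) → F))).ncard :=
          Set.ncard_le_ncard (Set.subset_univ C) Set.finite_univ
      _ = Nat.card _ := Set.ncard_univ _
  exact le_csSup hbdd hmem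
end
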